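/- arXiv:2603.10759 — 5 statements merged into one kernel-verified Lean document; each statement's English description precedes it below -/
import Mathlib

section
/- Let G be a group and x ∈ G such that the cyclic subgroup ⟨x⟩ is nearly normal in G (i.e. |⟨x⟩^G : ⟨x⟩| is finite). Then x is an FC-element of G. -/
open Subgroup

/-- `permCongr` as a monoid hom. -/
private def permCongrHom {α β : Type*} (e : α ≃ β) :
    Equiv.Perm α →* Equiv.Perm β where
  toFun := e.permCongr
  map_one' := by ext b; simp
  map_mul' p q := by
    ext b; simp [Equiv.permCongr_apply, Equiv.Perm.mul_apply]

private lemma zpowers_subgroupOf {G : Type*} [Group G] (K : Subgroup G) (x : G) (hx : x ∈ K) :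
    (Subgroup.zpowers x).subgroupOf K = Subgroup.zpowers (⟨x, hx⟩ : K) := by
  ext ⟨k, hk⟩
  simp only [Subgroup.mem_subgroupOf, Subgroup.mem_zpowers_iff]
  constructor
  · rintro ⟨m, hm⟩
    exact ⟨m, by ext; simpa using hm⟩
  · rintro ⟨m, hm⟩
    exact ⟨m, by simpa [Subtype.ext_iff] using hm⟩

private lemma subgroupOf_injOn {G : Type*} [Group G] {K A B : Subgroup G}
    (hA : A ≤ K) (hB : B ≤ K) (h : A.subgroupOf K = B.subgroupOf K) : A = B := by
  have := congrArg (fun L : Subgroup K => L.map K.subtype) h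
  simpa [Subgroup.subgroupOf_map_subtype, inf_eq_left.2 hA, inf_eq_left.2 hB] using this

/-- Marshall Hall's lemma: a finitely generated group has finitely many
subgroups of any given finite index. -/
private lemma finite_index_n {K : Type*} [Group K] (S : Set K) (hSf : S.Finite)
    (hS : Subgroup.closure S = ⊤) (n : ℕ) (hn : n ≠ 0) :
    {L : Subgroup K | L.index = n}.Finite := by
  rw [← Set.finite_coe_iff]
  haveI : Finite S := hSf.to_subtype
  -- for each such L, the quotient is finite of cardinality n
  have hfin : ∀ L : {L : Subgroup K | L.index = n}, Nat.card (K ⧸ (L : Subgroup K)) = n :=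
    fun L => L.2
  have hfinite : ∀ L : {L : Subgroup K | L.index = n}, Finite (K ⧸ (L : Subgroup K)) := by
    intro L
    exact Nat.finite_of_card_ne_zero (by rw [hfin L]; exact hn)
  -- a normalized equivalence with `Fin n` sending the identity coset to 0
  have key : ∀ L : {L : Subgroup K | L.index = n},
      ∃ e : K ⧸ (L : Subgroup K) ≃ Fin n, e ((1 : K) : K ⧸ (L : Subgroup K)) =
        ⟨0, Nat.pos_of_ne_zero hn⟩ := by
    intro L
    haveI := hfinite L
    obtain e := Finite.equivFinOfCardEq (hfin L)
    refine ⟨e.trans (Equiv.swap (e ((1 : K) : K ⧸ (L : Subgroup K))) ⟨0, Nat.pos_of_ne_zero hn⟩),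
      ?_⟩
    simp [Equiv.swap_apply_left]
  choose e he using key
  -- the permutation representation on Fin n
  let φ : ∀ L : {L : Subgroup K | L.index = n}, K →* Equiv.Perm (Fin n) :=
    fun L => (permCongrHom (e L)).comp (MulAction.toPermHom K (K ⧸ (L : Subgroup K)))
  -- L is recovered from φ L
  have hrec : ∀ L : {L : Subgroup K | L.index = n}, ∀ k : K,
      k ∈ (L : Subgroup K) ↔ φ L k ⟨0, Nat.pos_of_ne_zero hn⟩ = ⟨0, Nat.pos_of_ne_zero hn⟩ := by
    intro L k
    have : φ L k ⟨0, Nat.pos_of_ne_zero hn⟩ =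
        e L (k • ((e L).symm ⟨0, Nat.pos_of_ne_zero hn⟩)) := by
      simp [φ, permCongrHom, Equiv.permCongr_apply, MulAction.toPermHom]
    rw [this, ← he L, Equiv.symm_apply_apply]
    rw [Equiv.apply_eq_iff_eq_symm_apply, Equiv.symm_apply_apply]
    have hsmul : k • ((1 : K) : K ⧸ (L : Subgroup K)) = ((k : K) : K ⧸ (L : Subgroup K)) := by
      have := MulAction.Quotient.smul_mk (L : Subgroup K) k (1 : K)
      simpa using this
    rw [hsmul, QuotientGroup.eq]
    simp
  -- injectivity into a finite type
  apply Finite.of_injective (fun L => fun s : S => φ L (s : K))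
  intro L L' hLL'
  have hφ : φ L = φ L' := by
    apply MonoidHom.eq_of_eqOn_dense hS
    intro a ha
    exact congrFun hLL' ⟨a, ha⟩
  have : (L : Subgroup K) = (L' : Subgroup K) := by
    ext k
    rw [hrec L k, hrec L' k, hφ]
  exact Subtype.ext this

/-- A group with a finitely generated subgroup of finite index is finitely generated. -/
private lemma exists_finite_gen {K : Type*} [Group K] (H : Subgroup K) [H.FiniteIndex]
    (s : Set K) (hsf : s.Finite) (hs : Subgroup.closure s = H) :
    ∃ S : Set K, S.Finite ∧ Subgroup.closure S = ⊤ := by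
  haveI : Finite (K ⧸ H) := H.finite_quotient_of_finiteIndex
  refine ⟨s ∪ Set.range (fun q : K ⧸ H => q.out), hsf.union (Set.finite_range _), ?_⟩
  rw [eq_top_iff]
  intro k _
  set r := (QuotientGroup.mk k : K ⧸ H).out with hr
  have hmk : (QuotientGroup.mk r : K ⧸ H) = QuotientGroup.mk k := Quotient.out_eq _
  have hmem : r⁻¹ * k ∈ H := (QuotientGroup.eq).1 hmk
  have h1 : r ∈ Subgroup.closure (s ∪ Set.range (fun q : K ⧸ H => q.out)) :=
    Subgroup.subset_closure (Or.inr ⟨QuotientGroup.mk k, rfl⟩)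
  have h2 : r⁻¹ * k ∈ Subgroup.closure (s ∪ Set.range (fun q : K ⧸ H => q.out)) := by
    have : H ≤ Subgroup.closure (s ∪ Set.range (fun q : K ⧸ H => q.out)) := by
      rw [← hs]
      exact Subgroup.closure_mono Set.subset_union_left
    exact this hmem
  have := mul_mem h1 h2
  rwa [← mul_assoc, mul_inv_cancel, one_mul] at this

theorem nearlyNormal_cyclic_imp_FC {G : Type*} [Group G] (x : G)
    (h : ((Subgroup.zpowers x).subgroupOf
      (Subgroup.normalClosure ((Subgroup.zpowers x : Subgroup G) : Set G))).FiniteIndex) :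
    {y : G | IsConj x y}.Finite := by
  set K : Subgroup G := Subgroup.normalClosure ((Subgroup.zpowers x : Subgroup G) : Set G) with hK
  haveI : K.Normal := Subgroup.normalClosure_normal
  have hxK : x ∈ K := Subgroup.subset_normalClosure (Subgroup.mem_zpowers x)
  set H' : Subgroup K := (Subgroup.zpowers x).subgroupOf K with hH'
  haveI : H'.FiniteIndex := h
  have hH'z : H' = Subgroup.zpowers (⟨x, hxK⟩ : K) := zpowers_subgroupOf K x hxK
  -- every conjugate of x lies in K
  have hconj_mem : ∀ y : G, IsConj x y → y ∈ K := by
    intro y hy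
    obtain ⟨c, hc⟩ := isConj_iff.1 hy
    rw [← hc]
    exact ‹K.Normal›.conj_mem x hxK c
  by_cases hfin : IsOfFinOrder x
  · -- x has finite order: K is finite
    haveI : Finite (Subgroup.zpowers x) := hfin.finite_zpowers
    haveI : Finite H' := Finite.of_equiv _
      (Subgroup.subgroupOfEquivOfLe (Subgroup.zpowers_le.2 hxK)).symm.toEquiv
    haveI : Finite (K ⧸ H') := H'.finite_quotient_of_finiteIndex
    haveI : Finite K := Finite.of_equiv _ (Subgroup.groupEquivQuotientProdSubgroup (s := H')).symm
    have hsub : {y : G | IsConj x y} ⊆ (K : Set G) := fun y hy => hconj_mem y hy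
    exact Set.Finite.subset (Set.toFinite _) hsub
  · -- x has infinite order
    -- K is finitely generated
    obtain ⟨S, hSf, hS⟩ := exists_finite_gen H' {(⟨x, hxK⟩ : K)} (Set.finite_singleton _)
      (by rw [hH'z, Subgroup.zpowers_eq_closure])
    set n := H'.index with hn
    have hn0 : n ≠ 0 := h.index_ne_zero
    have hFfin : {L : Subgroup K | L.index = n}.Finite := finite_index_n S hSf hS n hn0
    -- each conjugate y gives a subgroup of K of index n
    have hidx : ∀ y : G, IsConj x y → ∀ hyK : y ∈ K,
        ((Subgroup.zpowers y).subgroupOf K).index = n := by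
      intro y hy hyK
      obtain ⟨c, hc⟩ := isConj_iff.1 hy
      set e : K ≃* K := MulAut.conjNormal c with he_def
      have hmap : H'.map e.toMonoidHom = (Subgroup.zpowers y).subgroupOf K := by
        rw [hH'z]
        have h1 : (Subgroup.zpowers (⟨x, hxK⟩ : K)).map e.toMonoidHom =
            Subgroup.zpowers (e ⟨x, hxK⟩) := MonoidHom.map_zpowers e.toMonoidHom _
        rw [h1]
        have he : e ⟨x, hxK⟩ = (⟨y, hyK⟩ : K) := by
          ext
          rw [he_def]
          rw [MulAut.conjNormal_apply]
          exact hc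
        rw [he, zpowers_subgroupOf K y hyK]
      rw [← hmap, Subgroup.map_equiv_eq_comap_symm']
      exact Subgroup.index_comap_of_surjective _ e.symm.surjective
    -- cover the conjugacy class by fibers over the finite set of index-n subgroups
    have hcover : {y : G | IsConj x y} ⊆
        ⋃ L ∈ {L : Subgroup K | L.index = n},
          {y : G | IsConj x y ∧ (Subgroup.zpowers y).subgroupOf K = L} := by
      intro y hy
      simp only [Set.mem_iUnion, Set.mem_setOf_eq]
      exact ⟨(Subgroup.zpowers y).subgroupOf K, hidx y hy (hconj_mem y hy), hy, rfl⟩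
    refine Set.Finite.subset (Set.Finite.biUnion hFfin ?_) hcover
    intro L _
    rcases Set.eq_empty_or_nonempty
      {y : G | IsConj x y ∧ (Subgroup.zpowers y).subgroupOf K = L} with hE | ⟨y₀, hy₀c, hy₀L⟩
    · rw [hE]; exact Set.finite_empty
    · refine Set.Finite.subset ((Set.finite_singleton y₀⁻¹).insert y₀) ?_
      rintro y ⟨hyc, hyL⟩
      -- zpowers y = zpowers y₀
      have hzp : Subgroup.zpowers y = Subgroup.zpowers y₀ :=
        subgroupOf_injOn (Subgroup.zpowers_le.2 (hconj_mem y hyc))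
          (Subgroup.zpowers_le.2 (hconj_mem y₀ hy₀c)) (hyL.trans hy₀L.symm)
      have hy₀inf : ¬ IsOfFinOrder y₀ := by
        intro hcon
        obtain ⟨c, hc⟩ := isConj_iff.1 hy₀c
        apply hfin
        rw [isOfFinOrder_iff_pow_eq_one] at hcon ⊢
        obtain ⟨m, hm, hm1⟩ := hcon
        refine ⟨m, hm, ?_⟩
        rw [← hc] at hm1
        have hpow : (c * x * c⁻¹) ^ m = c * x ^ m * c⁻¹ := by
          have := map_pow (MulEquiv.toMonoidHom (MulAut.conj c)) x m
          simpa [MulAut.conj_apply] using this.symm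
        rw [hpow] at hm1
        have := congrArg (fun t => c⁻¹ * t * c) hm1
        simpa [mul_assoc] using this
      have hy_mem : y ∈ Subgroup.zpowers y₀ := hzp ▸ Subgroup.mem_zpowers y
      have hy₀_mem : y₀ ∈ Subgroup.zpowers y := hzp ▸ Subgroup.mem_zpowers y₀
      obtain ⟨k, hk⟩ := Subgroup.mem_zpowers_iff.1 hy_mem
      obtain ⟨m, hm⟩ := Subgroup.mem_zpowers_iff.1 hy₀_mem
      have hkm : y₀ ^ (k * m) = y₀ ^ (1 : ℤ) := by
        rw [zpow_one, zpow_mul, hk, hm]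
      have hinj := injective_zpow_iff_not_isOfFinOrder.2 hy₀inf
      have : k * m = 1 := hinj hkm
      rcases Int.eq_one_or_neg_one_of_mul_eq_one this with h1 | h1
      · left; rw [← hk, h1, zpow_one]
      · right; rw [← hk, h1, zpow_neg, zpow_one]; exact rfl
end

section
/- Let G be a group, H ≤ N_G(K), and suppose H and K are nearly normal in G. Then HK is nearly normal in G. -/
open Pointwise

/-- `H` is nearly normal in `G` if it has finite index in its normal closure. -/
def NearlyNormal {G : Type*} [Group G] (H : Subgroup G) : Prop :=
  (H.subgroupOf (Subgroup.normalClosure (H : Set G))).FiniteIndex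

lemma mul_eq_sup_of_le_normalizer' {G : Type*} [Group G] (H K : Subgroup G)
    (hHK : H ≤ Subgroup.normalizer (K : Set G)) :
    (H : Set G) * (K : Set G) = ((H ⊔ K : Subgroup G) : Set G) := by
  have conj_mem : ∀ g ∈ H, ∀ k ∈ K, g * k * g⁻¹ ∈ K := fun g hg k hk =>
    (Subgroup.mem_normalizer_iff.mp (hHK hg) k).mp hk
  apply Set.Subset.antisymm
  · rintro x ⟨h, hh, k, hk, rfl⟩
    exact mul_mem (Subgroup.mem_sup_left hh) (Subgroup.mem_sup_right hk)
  · let S : Subgroup G :=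
      { carrier := (H : Set G) * (K : Set G)
        one_mem' := ⟨1, one_mem _, 1, one_mem _, one_mul 1⟩
        mul_mem' := by
          rintro a b ⟨h1, hh1, k1, hk1, rfl⟩ ⟨h2, hh2, k2, hk2, rfl⟩
          refine ⟨h1 * h2, mul_mem hh1 hh2, (h2⁻¹ * k1 * h2) * k2, mul_mem ?_ hk2, by group⟩
          have := conj_mem h2⁻¹ (inv_mem hh2) k1 hk1
          rwa [inv_inv] at this
        inv_mem' := by
          rintro a ⟨h, hh, k, hk, rfl⟩
          exact ⟨h⁻¹, inv_mem hh, h * k⁻¹ * h⁻¹, conj_mem h hh k⁻¹ (inv_mem hk), by group⟩ }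
    have hle : H ⊔ K ≤ S := sup_le
      (fun h hh => ⟨h, hh, 1, one_mem _, mul_one h⟩)
      (fun k hk => ⟨1, one_mem _, k, hk, one_mul k⟩)
    exact fun x hx => hle hx

/-- If `B` is normal and `M ⊓ B` has finite index in `B`, then `M` has finite
index in `M ⊔ B`. -/
lemma relindex_sup_ne_zero_of_relindex_inf_ne_zero {G : Type*} [Group G] (M B : Subgroup G)
    [B.Normal] (h : (M ⊓ B).relIndex B ≠ 0) : M.relIndex (M ⊔ B) ≠ 0 := by
  rw [Subgroup.relIndex, Subgroup.index, Nat.card_ne_zero] at h ⊢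
  obtain ⟨_, hfin⟩ := h
  refine ⟨⟨QuotientGroup.mk 1⟩, ?_⟩
  -- surjection from B ⧸ (M ⊓ B) onto the coset space (M ⊔ B) ⧸ M
  let f : (B ⧸ (M ⊓ B).subgroupOf B) → ((M ⊔ B : Subgroup G) ⧸ M.subgroupOf (M ⊔ B)) :=
    Quotient.map' (fun b => ⟨(b : G), le_sup_right (α := Subgroup G) b.2⟩)
      (by
        intro a b hab
        rw [QuotientGroup.leftRel_apply] at hab ⊢
        rw [Subgroup.mem_subgroupOf] at hab ⊢
        exact hab.1)
  have hsurj : Function.Surjective f := by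
    intro x
    refine QuotientGroup.induction_on x ?_
    intro g
    have hg : (g : G) ∈ (B : Set G) * (M : Set G) := by
      rw [← Subgroup.normal_mul B M, sup_comm B M]
      exact g.2
    obtain ⟨b, hb, m, hm, hbm⟩ := hg
    refine ⟨QuotientGroup.mk ⟨b, hb⟩, ?_⟩
    show Quotient.map' _ _ (Quotient.mk'' _) = _
    rw [Quotient.map'_mk'']
    refine (QuotientGroup.eq (s := M.subgroupOf (M ⊔ B))).mpr ?_
    rw [Subgroup.mem_subgroupOf]
    show b⁻¹ * (g : G) ∈ M
    rw [← hbm]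
    simpa using hm
  exact Finite.of_surjective f hsurj

/-- Near normality is normalizing join-closed: if `H ≤ N_G(K)` and both `H` and `K`
are nearly normal, then `HK = ⟨H, K⟩` is nearly normal. -/
theorem nearlyNormal_join {G : Type*} [Group G] (H K : Subgroup G)
    (hHK : H ≤ Subgroup.normalizer (K : Set G))
    (hH : NearlyNormal H) (hK : NearlyNormal K) :
    ((H : Set G) * (K : Set G) = ((H ⊔ K : Subgroup G) : Set G)) ∧
      NearlyNormal (H ⊔ K) := by
  refine ⟨mul_eq_sup_of_le_normalizer' H K hHK, ?_⟩
  set A := Subgroup.normalClosure (H : Set G) with hA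
  set B := Subgroup.normalClosure (K : Set G) with hB
  have hHA : H ≤ A := fun x hx => Subgroup.subset_normalClosure hx
  have hKB : K ≤ B := fun x hx => Subgroup.subset_normalClosure hx
  have hHrel : H.relIndex A ≠ 0 := hH.index_ne_zero
  have hKrel : K.relIndex B ≠ 0 := hK.index_ne_zero
  -- the normal closure of H ⊔ K is A ⊔ B
  have hN : Subgroup.normalClosure ((H ⊔ K : Subgroup G) : Set G) = A ⊔ B := by
    apply le_antisymm
    · apply Subgroup.normalClosure_le_normal
      exact fun x hx => (sup_le (hHA.trans le_sup_left) (hKB.trans le_sup_right)) hx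
    · exact sup_le
        (Subgroup.normalClosure_mono (fun x hx => Subgroup.mem_sup_left hx))
        (Subgroup.normalClosure_mono (fun x hx => Subgroup.mem_sup_right hx))
  have key : (H ⊔ K).relIndex (A ⊔ B) ≠ 0 := by
    have h1 : H ⊔ K ≤ A ⊔ K := sup_le (hHA.trans le_sup_left) le_sup_right
    have h2 : A ⊔ K ≤ A ⊔ B := sup_le le_sup_left (hKB.trans le_sup_right)
    rw [← Subgroup.relIndex_mul_relIndex (H ⊔ K) (A ⊔ K) (A ⊔ B) h1 h2]
    apply mul_ne_zero
    · -- (H ⊔ K) has finite index in A ⊔ K = (H ⊔ K) ⊔ A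
      have heq : (H ⊔ K) ⊔ A = A ⊔ K := by
        rw [sup_comm (H ⊔ K) A, ← sup_assoc, sup_of_le_left hHA]
      have hinf : ((H ⊔ K) ⊓ A).relIndex A ≠ 0 :=
        ne_zero_of_dvd_ne_zero hHrel
          (Subgroup.relIndex_dvd_of_le_left A (le_inf le_sup_left hHA))
      have := relindex_sup_ne_zero_of_relindex_inf_ne_zero (H ⊔ K) A hinf
      rwa [heq] at this
    · -- A ⊔ K has finite index in A ⊔ B = (A ⊔ K) ⊔ B
      have heq : (A ⊔ K) ⊔ B = A ⊔ B := by
        rw [sup_assoc, sup_of_le_right hKB]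
      have hinf : ((A ⊔ K) ⊓ B).relIndex B ≠ 0 :=
        ne_zero_of_dvd_ne_zero hKrel
          (Subgroup.relIndex_dvd_of_le_left B (le_inf (le_sup_right.trans le_rfl) hKB))
      have := relindex_sup_ne_zero_of_relindex_inf_ne_zero (A ⊔ K) B hinf
      rwa [heq] at this
  constructor
  show (H ⊔ K).relIndex (Subgroup.normalClosure ((H ⊔ K : Subgroup G) : Set G)) ≠ 0
  rw [hN]
  exact key
end

section
/- In a locally nilpotent group G, a subgroup H is pronormal in G if and only if H is normal in G. -/
/-- The conjugate subgroup `gHg⁻¹`. Thus `H^g = g⁻¹Hg` is `conjBy g⁻¹ H`. -/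
def conjBy {G : Type*} [Group G] (g : G) (H : Subgroup G) : Subgroup G :=
  H.map (MulAut.conj g).toMonoidHom

/-- `H` is pronormal in `G` if for every `g`, `H` and `H^g` are conjugate by an
element of `⟨H, H^g⟩`. -/
def Pronormal {G : Type*} [Group G] (H : Subgroup G) : Prop :=
  ∀ g : G, ∃ x ∈ H ⊔ conjBy g⁻¹ H, conjBy x⁻¹ H = conjBy g⁻¹ H


lemma mem_conjBy {G : Type*} [Group G] {g x : G} {A : Subgroup G} :
    x ∈ conjBy g A ↔ g⁻¹ * x * g ∈ A := by
  constructor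
  · rintro ⟨a, ha, rfl⟩
    simpa [mul_assoc] using ha
  · intro h
    exact ⟨g⁻¹ * x * g, h, by simp [mul_assoc]⟩

lemma conjBy_map {G G' : Type*} [Group G] [Group G'] (f : G →* G') (g : G) (A : Subgroup G) :
    (conjBy g A).map f = conjBy (f g) (A.map f) := by
  simp only [conjBy, Subgroup.map_map]
  congr 1
  ext a
  simp

lemma conjBy_self {G : Type*} [Group G] {A : Subgroup G} {a : G} (ha : a ∈ A) :
    conjBy a A = A := by
  ext x
  rw [mem_conjBy]
  exact ⟨fun h => by simpa [mul_assoc] using A.mul_mem (A.mul_mem ha h) (A.inv_mem ha),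
    fun h => A.mul_mem (A.mul_mem (A.inv_mem ha) h) ha⟩

/-- In a nilpotent group, `x ∈ ⟨A, A^x⟩` implies `x ∈ A`. -/
lemma mem_of_mem_sup_conjBy_aux : ∀ (n : ℕ) {F : Type _} [Group F] [Group.IsNilpotent F],
    Group.nilpotencyClass F ≤ n → ∀ (A : Subgroup F) (x : F), x ∈ A ⊔ conjBy x⁻¹ A → x ∈ A := by
  intro n
  induction n with
  | zero =>
    intro F _ _ hc A x _
    have : Subsingleton F := nilpotencyClass_zero_iff_subsingleton.mp (Nat.le_zero.mp hc)
    have : x = 1 := Subsingleton.elim _ _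
    exact this ▸ A.one_mem
  | succ n ih =>
    intro F _ _ hc A x hx
    set Q := F ⧸ Subgroup.center F
    let π : F →* Q := QuotientGroup.mk' (Subgroup.center F)
    have hcQ : Group.nilpotencyClass Q ≤ n := by
      rw [nilpotencyClass_quotient_center]
      omega
    have hπx : π x ∈ A.map π ⊔ conjBy (π x)⁻¹ (A.map π) := by
      have := Subgroup.mem_map_of_mem π hx
      rw [Subgroup.map_sup, conjBy_map] at this
      simpa using this
    obtain ⟨a, ha, hax⟩ := ih hcQ (A.map π) (π x) hπx
    -- x = a * z with z central
    have hz : a⁻¹ * x ∈ Subgroup.center F := by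
      have : a⁻¹ * x ∈ π.ker := by
        rw [MonoidHom.mem_ker, map_mul, map_inv, hax, inv_mul_cancel]
      rwa [QuotientGroup.ker_mk'] at this
    have hconj : conjBy x⁻¹ A = A := by
      ext y
      rw [mem_conjBy, inv_inv]
      have hcomm : ∀ w : F, (a⁻¹ * x) * w = w * (a⁻¹ * x) := fun w =>
        (Subgroup.mem_center_iff.mp hz w).symm
      constructor
      · intro h
        -- x * y * x⁻¹ ∈ A, want y ∈ A; x = a * (a⁻¹ x), central part
        have h2 : a * y * a⁻¹ ∈ A := by
          have : x * y * x⁻¹ = a * y * a⁻¹ := by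
            have : x = a * (a⁻¹ * x) := by group
            calc x * y * x⁻¹ = a * ((a⁻¹ * x) * y) * x⁻¹ := by group
              _ = a * (y * (a⁻¹ * x)) * x⁻¹ := by rw [hcomm y]
              _ = a * y * a⁻¹ := by group
          rwa [this] at h
        simpa [mul_assoc] using A.mul_mem (A.mul_mem (A.inv_mem ha) h2) ha
      · intro h
        have h2 : a * y * a⁻¹ ∈ A := by
          simpa [mul_assoc] using A.mul_mem (A.mul_mem ha h) (A.inv_mem ha)
        have : x * y * x⁻¹ = a * y * a⁻¹ := by
          calc x * y * x⁻¹ = a * ((a⁻¹ * x) * y) * x⁻¹ := by group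
            _ = a * (y * (a⁻¹ * x)) * x⁻¹ := by rw [hcomm y]
            _ = a * y * a⁻¹ := by group
        rwa [this]
    rw [hconj, sup_idem] at hx
    exact hx

lemma mem_of_mem_sup_conjBy {F : Type _} [Group F] [Group.IsNilpotent F]
    (A : Subgroup F) (x : F) (hx : x ∈ A ⊔ conjBy x⁻¹ A) : x ∈ A :=
  mem_of_mem_sup_conjBy_aux (Group.nilpotencyClass F) le_rfl A x hx

/-- In a locally nilpotent group, pronormality coincides with normality. -/

theorem pronormal_iff_normal_of_locallyNilpotent {G : Type*} [Group G]
    (hG : ∀ H : Subgroup G, H.FG → Group.IsNilpotent H) (H : Subgroup G) :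
    Pronormal H ↔ H.Normal := by
  constructor
  · intro hp
    have key : ∀ g : G, conjBy g⁻¹ H = H := by
      intro g
      obtain ⟨x, hxmem, hxeq⟩ := hp g
      rw [← hxeq] at hxmem ⊢
      suffices hxH : x ∈ H by exact conjBy_self (H.inv_mem hxH)
      set K := conjBy x⁻¹ H with hK
      -- extract a word
      have hcl : x ∈ Submonoid.closure (((H : Set G) ∪ (K : Set G)) ∪
          ((H : Set G) ∪ (K : Set G))⁻¹) := by
        have : x ∈ Subgroup.closure ((H : Set G) ∪ (K : Set G)) := by
          rwa [Subgroup.closure_union, Subgroup.closure_eq, Subgroup.closure_eq]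
        rwa [← Subgroup.mem_toSubmonoid, Subgroup.closure_toSubmonoid] at this
      obtain ⟨l, hl1, hl2⟩ := Submonoid.exists_list_of_mem_closure hcl
      -- every element of the list is in H or in K
      have hl1' : ∀ y ∈ l, y ∈ H ∨ y ∈ K := by
        intro y hy
        rcases hl1 y hy with (h | h) | h
        · exact Or.inl h
        · exact Or.inr h
        · rcases h with h | h
          · exact Or.inl (H.inv_mem_iff.mp h)
          · exact Or.inr (K.inv_mem_iff.mp h)
      set S₁ : Set G := {y | y ∈ l ∧ y ∈ H} with hS₁
      set S₂ : Set G := {z | ∃ y, y ∈ l ∧ y ∈ K ∧ z = x * y * x⁻¹} with hS₂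
      have hfin : (S₁ ∪ S₂).Finite := by
        apply Set.Finite.union
        · exact l.finite_toSet.subset fun y hy => hy.1
        · apply (l.finite_toSet.image (fun y => x * y * x⁻¹)).subset
          rintro z ⟨y, hyl, _, rfl⟩
          exact ⟨y, hyl, rfl⟩
      set H₀ := Subgroup.closure (S₁ ∪ S₂) with hH₀
      have hH₀le : H₀ ≤ H := by
        rw [hH₀, Subgroup.closure_le]
        rintro z (⟨-, hz⟩ | ⟨y, -, hy, rfl⟩)
        · exact hz
        · have := mem_conjBy.mp hy
          rwa [inv_inv] at this
      have hxH₀ : x ∈ H₀ ⊔ conjBy x⁻¹ H₀ := by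
        have hprod : l.prod ∈ H₀ ⊔ conjBy x⁻¹ H₀ := by
          refine Subgroup.list_prod_mem _ fun y hy => ?_
          rcases hl1' y hy with h | h
          · exact Subgroup.mem_sup_left (Subgroup.subset_closure (Or.inl ⟨hy, h⟩))
          · have h' : x * y * x⁻¹ ∈ H₀ :=
              Subgroup.subset_closure (Or.inr ⟨y, hy, h, rfl⟩)
            refine Subgroup.mem_sup_right ?_
            rw [mem_conjBy, inv_inv]
            exact h'
        rwa [hl2] at hprod
      -- the finitely generated envelope
      set F := Subgroup.closure ((S₁ ∪ S₂) ∪ {x}) with hF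
      have hFfg : F.FG := (Subgroup.fg_iff _).mpr ⟨_, rfl, hfin.union (Set.finite_singleton x)⟩
      haveI : Group.IsNilpotent F := hG F hFfg
      have hH₀F : H₀ ≤ F := Subgroup.closure_mono Set.subset_union_left
      have hxF : x ∈ F := Subgroup.subset_closure (Or.inr rfl)
      set x' : F := ⟨x, hxF⟩ with hx'
      set A := H₀.subgroupOf F with hA
      have hmap : A.map F.subtype = H₀ := by
        rw [hA, Subgroup.subgroupOf_map_subtype, inf_eq_left.mpr hH₀F]
      have hsup : (A ⊔ conjBy x'⁻¹ A).map F.subtype = H₀ ⊔ conjBy x⁻¹ H₀ := by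
        rw [Subgroup.map_sup, conjBy_map, hmap]
        rfl
      have hx'mem : x' ∈ A ⊔ conjBy x'⁻¹ A := by
        have hx2 : x ∈ (A ⊔ conjBy x'⁻¹ A).map F.subtype := hsup ▸ hxH₀
        obtain ⟨y, hy, hyx⟩ := hx2
        have : y = x' := Subtype.ext hyx
        exact this ▸ hy
      have : x' ∈ A := mem_of_mem_sup_conjBy A x' hx'mem
      exact hH₀le (Subgroup.mem_subgroupOf.mp this)
    refine ⟨fun n hn g => ?_⟩
    have hg : conjBy g H = H := by have := key g⁻¹; rwa [inv_inv] at this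
    rw [← hg, mem_conjBy]
    have : g⁻¹ * (g * n * g⁻¹) * g = n := by group
    rwa [this]
  · intro hN g
    have h2 : conjBy g⁻¹ H = H := by
      ext y
      rw [mem_conjBy, inv_inv]
      constructor
      · intro h
        have := hN.conj_mem _ h g⁻¹
        have e : g⁻¹ * (g * y * g⁻¹) * g⁻¹⁻¹ = y := by group
        rwa [e] at this
      · intro h
        exact hN.conj_mem _ h g
    refine ⟨1, (H ⊔ conjBy g⁻¹ H).one_mem, ?_⟩
    rw [h2]
    ext y
    rw [mem_conjBy]
    simp
end

section
/- Let K be a finite field of order q² with q a power of a prime, and consider the group U of upper unitriangular 3×3 matrices M over K satisfying the unitary condition (with respect to the involution x ↦ x^q). Suppose q is even. Choose b, s, t ∈ K with b + b^q = 1, t + t^q = s^{q+1}, and s + s^q ∉ {0, 1}. Let g be the unitriangular matrix with superdiagonal entries (1, 1) and corner entry b, and let h be the unitriangular matrix with superdiagonal entries (s, s^q) and corner entry t. Then g has order 4 and h does not normalize ⟨g⟩. -/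
/-- In the unitriangular 'unitary' group over `GF(q²)` with `q` even, the element `g`
has order `4` and `h` does not normalize `⟨g⟩`. -/
theorem unitary_not_dedekind (q : ℕ) (hq : ∃ p k : ℕ, p.Prime ∧ 0 < k ∧ q = p ^ k)
    (hq2 : 2 ∣ q) (K : Type*) [Field K] [Fintype K] (hcard : Fintype.card K = q ^ 2)
    (b s t : K) (hb : b + b ^ q = 1) (ht : t + t ^ q = s ^ (q + 1))
    (hs0 : s + s ^ q ≠ 0) (hs1 : s + s ^ q ≠ 1) :
    orderOf (!![1, 1, b; 0, 1, 1; 0, 0, 1] : Matrix (Fin 3) (Fin 3) K) = 4 ∧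
      ∀ k : ℕ,
        (!![1, 1, b; 0, 1, 1; 0, 0, 1] : Matrix (Fin 3) (Fin 3) K) *
            !![1, s, t; 0, 1, s ^ q; 0, 0, 1] ≠
          !![1, s, t; 0, 1, s ^ q; 0, 0, 1] *
            (!![1, 1, b; 0, 1, 1; 0, 0, 1] : Matrix (Fin 3) (Fin 3) K) ^ k := by
  -- characteristic 2
  have h2 : (2 : K) = 0 := by
    have hc := ringChar.charP K
    obtain ⟨n, hn⟩ := FiniteField.card K (ringChar K)
    have hp : (ringChar K).Prime := hn.1
    have hdvd : ringChar K ∣ q ^ 2 := by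
      rw [← hcard, hn.2]; exact dvd_pow_self _ n.2.ne'
    obtain ⟨p, k, hpp, hk, rfl⟩ := hq
    have h2p : 2 ∣ p := Nat.Prime.dvd_of_dvd_pow Nat.prime_two hq2
    have hp2 : p = 2 := ((Nat.prime_dvd_prime_iff_eq Nat.prime_two hpp).mp h2p).symm
    have h1 : ringChar K ∣ 2 := hp.dvd_of_dvd_pow (by rwa [hp2, ← pow_mul] at hdvd)
    have h2 : ringChar K = 2 := (Nat.prime_dvd_prime_iff_eq hp Nat.prime_two).mp h1
    haveI : CharP K 2 := h2 ▸ hc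
    exact_mod_cast CharP.cast_eq_zero K 2
  set g : Matrix (Fin 3) (Fin 3) K := !![1, 1, b; 0, 1, 1; 0, 0, 1] with hg
  set h : Matrix (Fin 3) (Fin 3) K := !![1, s, t; 0, 1, s ^ q; 0, 0, 1] with hh
  have e2 : g * g = !![1, 0, 1; 0, 1, 0; 0, 0, 1] := by
    ext i j
    fin_cases i <;> fin_cases j <;>
      simp [hg, Matrix.mul_apply, Fin.sum_univ_three, Matrix.vecHead, Matrix.vecTail] <;>
      first
        | rfl
        | linear_combination h2
        | linear_combination b * h2
  have hg4 : g ^ 4 = 1 := by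
    have h4 : g ^ 4 = (g * g) * (g * g) := by
      rw [show (4:ℕ) = 2*2 from rfl, pow_mul, sq, sq]
    rw [h4, e2]
    ext i j
    fin_cases i <;> fin_cases j <;>
      simp [Matrix.mul_apply, Fin.sum_univ_three, Matrix.one_apply, Matrix.vecHead,
        Matrix.vecTail] <;>
      linear_combination h2
  have hg2 : ¬ g ^ 2 = 1 := by
    rw [pow_two, e2]
    intro hE
    have := congrFun (congrFun hE 0) 2
    simp [Matrix.one_apply] at this
  constructor
  · have := orderOf_eq_prime_pow (x := g) (p := 2) (n := 1) (by rwa [pow_one]) (by norm_num [hg4])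
    norm_num at this ⊢
    exact this
  · intro k hE
    have hk4 : g ^ k = g ^ (k % 4) := by
      conv_lhs => rw [← Nat.div_add_mod k 4]
      rw [pow_add, pow_mul, hg4, one_pow, one_mul]
    rw [hk4] at hE
    have hlt : k % 4 < 4 := Nat.mod_lt _ (by norm_num)
    set m := k % 4 with hm
    interval_cases m
    · have := congrFun (congrFun hE 0) 1
      simp [hg, hh, Matrix.mul_apply, Fin.sum_univ_three, Matrix.one_apply, Matrix.vecHead,
        Matrix.vecTail] at this
    · rw [pow_one] at hE
      have := congrFun (congrFun hE 0) 2
      simp [hg, hh, Matrix.mul_apply, Fin.sum_univ_three, Matrix.vecHead, Matrix.vecTail] at this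
      exact hs0 (by linear_combination this + s * h2)
    · rw [pow_two, e2] at hE
      have := congrFun (congrFun hE 0) 1
      simp [hg, hh, Matrix.mul_apply, Fin.sum_univ_three, Matrix.vecHead, Matrix.vecTail] at this
    · rw [show g ^ 3 = g * g * g from by rw [pow_succ, pow_two], e2] at hE
      have := congrFun (congrFun hE 0) 2
      simp [hg, hh, Matrix.mul_apply, Fin.sum_univ_three, Matrix.vecHead, Matrix.vecTail] at this
      exact hs1 (by linear_combination this + s * h2)
end

section
/- Let G be a group, F a finite subgroup of the FC-centre of G. Then the normal closure F^G is finite (Dietzmann's Lemma). -/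
open Subgroup
open scoped commutatorElement

/-- Commutators are unchanged by multiplying the arguments by central elements. -/
lemma central_commutator_shift {H : Type*} [Group H] (a b z w : H)
    (hz : z ∈ Subgroup.center H) (hw : w ∈ Subgroup.center H) :
    ⁅a * z, b * w⁆ = ⁅a, b⁆ := by
  have hz' : ∀ g : H, z * g = g * z := fun g => (Subgroup.mem_center_iff.mp hz g).symm
  have hw' : ∀ g : H, w * g = g * w := fun g => (Subgroup.mem_center_iff.mp hw g).symm
  calc ⁅a * z, b * w⁆
      = a * (z * (b * w) * z⁻¹) * (a⁻¹ * w⁻¹) * b⁻¹ := by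
        rw [commutatorElement_def]; group
    _ = a * (b * w) * (a⁻¹ * w⁻¹) * b⁻¹ := by rw [hz' (b * w)]; group
    _ = a * b * (w * a⁻¹ * w⁻¹) * b⁻¹ := by group
    _ = a * b * a⁻¹ * b⁻¹ := by rw [hw' a⁻¹]; group
    _ = ⁅a, b⁆ := (commutatorElement_def a b).symm

/-- The centralizer of an element with finite conjugacy class has finite index. -/
lemma centralizer_finiteIndex_of_finite_conj {G : Type*} [Group G] (x : G)
    (hfc : {y : G | IsConj x y}.Finite) : (Subgroup.centralizer {x}).FiniteIndex := by
  set H := Subgroup.centralizer ({x} : Set G) with hH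
  have hwd : ∀ a b : G, a⁻¹ * b ∈ H → a * x * a⁻¹ = b * x * b⁻¹ := by
    intro a b hab
    have h1 : x * (a⁻¹ * b) = (a⁻¹ * b) * x :=
      Subgroup.mem_centralizer_iff.mp hab x (Set.mem_singleton x)
    have h2 := congrArg (fun t => a * t * b⁻¹) h1
    simp only [mul_assoc] at h2
    simpa [mul_assoc] using h2
  let f : G ⧸ H → {y : G | IsConj x y} := fun q =>
    Quotient.liftOn' q (fun g => ⟨g * x * g⁻¹, isConj_iff.mpr ⟨g, rfl⟩⟩)
      (fun a b hab =>
        Subtype.ext (hwd a b (QuotientGroup.leftRel_apply.mp hab)))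
  have hinj : Function.Injective f := by
    intro q r hqr
    induction q using Quotient.inductionOn'
    induction r using Quotient.inductionOn'
    rename_i a b
    apply Quotient.sound'
    rw [QuotientGroup.leftRel_apply]
    have hab : a * x * a⁻¹ = b * x * b⁻¹ := congrArg Subtype.val hqr
    refine Subgroup.mem_centralizer_iff.mpr ?_
    intro h hh
    rw [Set.mem_singleton_iff] at hh
    subst hh
    have h2 := congrArg (fun t => a⁻¹ * t * b) hab
    simp only [mul_assoc] at h2
    simpa [mul_assoc] using h2
  have : Finite {y : G | IsConj x y} := hfc.to_subtype
  have : Finite (G ⧸ H) := Finite.of_injective f hinj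
  exact Subgroup.finiteIndex_of_finite_quotient

/-- Dietzmann's Lemma: the normal closure of a finite subgroup of the FC-centre is finite. -/
theorem dietzmann {G : Type*} [Group G] (F : Subgroup G) (hfin : (F : Set G).Finite)
    (hFC : ∀ x ∈ F, {y : G | IsConj x y}.Finite) :
    ((Subgroup.normalClosure (F : Set G) : Subgroup G) : Set G).Finite := by
  classical
  set X : Set G := Group.conjugatesOfSet (F : Set G) with hXdef
  set K : Subgroup G := Subgroup.normalClosure (F : Set G) with hKdef
  have hKX : K = Subgroup.closure X := rfl
  -- X is finite
  have hXfin : X.Finite := by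
    have hX : X = ⋃ a ∈ (F : Set G), {y : G | IsConj a y} := by
      ext y
      simp only [hXdef, Group.mem_conjugatesOfSet_iff, Set.mem_iUnion, Set.mem_setOf_eq,
        SetLike.mem_coe, exists_prop]
    rw [hX]
    exact hfin.biUnion fun a ha => hFC a ha
  -- every element of X is torsion
  have hTor : ∀ x ∈ X, IsOfFinOrder x := by
    intro x hx
    obtain ⟨a, haF, hax⟩ := Group.mem_conjugatesOfSet_iff.mp hx
    have hFfin : Finite F := hfin.to_subtype
    have ha : IsOfFinOrder a := by
      have h := isOfFinOrder_of_finite (⟨a, haF⟩ : F)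
      exact (Subgroup.subtype_injective F).isOfFinOrder_iff.mpr h
    obtain ⟨c, hc⟩ := isConj_iff.mp hax
    subst hc
    obtain ⟨n, hn, hxn⟩ := ha
    rw [isPeriodicPt_mul_iff_pow_eq_one] at hxn
    exact ⟨n, hn, by
      rw [isPeriodicPt_mul_iff_pow_eq_one, conj_pow, hxn, mul_one, mul_inv_cancel]⟩
  -- elements of X have finite conjugacy class
  have hXFC : ∀ x ∈ X, {y : G | IsConj x y}.Finite := by
    intro x hx
    obtain ⟨a, haF, hax⟩ := Group.mem_conjugatesOfSet_iff.mp hx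
    have he : {y : G | IsConj x y} = {y : G | IsConj a y} := by
      ext y; exact ⟨fun h => hax.trans h, fun h => hax.symm.trans h⟩
    rw [he]
    exact hFC a haF
  -- the big centralizer
  set C : Subgroup G := ⨅ x ∈ hXfin.toFinset, Subgroup.centralizer {(x : G)} with hCdef
  haveI hCfi : C.FiniteIndex := by
    apply Subgroup.finiteIndex_iInf'
    intro x hxmem
    exact centralizer_finiteIndex_of_finite_conj x (hXFC x (hXfin.mem_toFinset.mp hxmem))
  -- C ∩ K is contained in the center of K
  have hCle : C.subgroupOf K ≤ Subgroup.center ↥K := by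
    rintro ⟨c, hcK⟩ hc
    rw [Subgroup.mem_subgroupOf] at hc
    rw [Subgroup.mem_center_iff]
    rintro ⟨g, hgK⟩
    have hKle : K ≤ Subgroup.centralizer {c} := by
      rw [hKX, Subgroup.closure_le]
      intro x hxX
      rw [SetLike.mem_coe, Subgroup.mem_centralizer_iff]
      intro h hh
      rw [Set.mem_singleton_iff] at hh
      subst hh
      have hle : C ≤ Subgroup.centralizer {x} := by
        refine iInf_le_of_le x ?_
        exact iInf_le_of_le (hXfin.mem_toFinset.mpr hxX) le_rfl
      exact (Subgroup.mem_centralizer_iff.mp (hle hc) x (Set.mem_singleton x)).symm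
    refine Subtype.ext ?_
    show g * c = c * g
    exact (Subgroup.mem_centralizer_iff.mp (hKle hgK) c (Set.mem_singleton c)).symm
  haveI : (C.subgroupOf K).FiniteIndex := Subgroup.instFiniteIndex_subgroupOf C K
  haveI hZfi : (Subgroup.center ↥K).FiniteIndex := Subgroup.finiteIndex_of_le hCle
  haveI hQfin : Finite (↥K ⧸ Subgroup.center ↥K) :=
    Nat.finite_of_card_ne_zero hZfi.index_ne_zero
  -- commutatorSet of K is finite
  haveI hcsfin : Finite (commutatorSet ↥K) := by
    let f : (↥K ⧸ Subgroup.center ↥K) × (↥K ⧸ Subgroup.center ↥K) → ↥K := fun p =>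
      ⁅(Quotient.out p.1 : ↥K), (Quotient.out p.2 : ↥K)⁆
    have hsub : commutatorSet ↥K ⊆ Set.range f := by
      rintro g ⟨g₁, g₂, rfl⟩
      refine ⟨(QuotientGroup.mk g₁, QuotientGroup.mk g₂), ?_⟩
      have h₁ : g₁⁻¹ * Quotient.out (QuotientGroup.mk g₁ : ↥K ⧸ Subgroup.center ↥K) ∈
          Subgroup.center ↥K := by
        rw [← QuotientGroup.eq]
        exact (QuotientGroup.out_eq' _).symm
      have h₂ : g₂⁻¹ * Quotient.out (QuotientGroup.mk g₂ : ↥K ⧸ Subgroup.center ↥K) ∈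
          Subgroup.center ↥K := by
        rw [← QuotientGroup.eq]
        exact (QuotientGroup.out_eq' _).symm
      have e : f (QuotientGroup.mk g₁, QuotientGroup.mk g₂) = ⁅g₁, g₂⁆ := by
        show ⁅(Quotient.out (QuotientGroup.mk g₁ : ↥K ⧸ Subgroup.center ↥K)),
          (Quotient.out (QuotientGroup.mk g₂ : ↥K ⧸ Subgroup.center ↥K))⁆ = ⁅g₁, g₂⁆
        rw [show Quotient.out (QuotientGroup.mk g₁ : ↥K ⧸ Subgroup.center ↥K) =
            g₁ * (g₁⁻¹ * Quotient.out (QuotientGroup.mk g₁ : ↥K ⧸ Subgroup.center ↥K)) by group,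
          show Quotient.out (QuotientGroup.mk g₂ : ↥K ⧸ Subgroup.center ↥K) =
            g₂ * (g₂⁻¹ * Quotient.out (QuotientGroup.mk g₂ : ↥K ⧸ Subgroup.center ↥K)) by group]
        exact central_commutator_shift g₁ g₂ _ _ h₁ h₂
      exact e
    exact Set.Finite.to_subtype ((Set.finite_range f).subset hsub)
  -- Schur: the commutator subgroup of K is finite
  haveI hcomm : Finite (_root_.commutator ↥K) := inferInstance
  -- K is finitely generated
  have hpre : Subgroup.closure (K.subtype ⁻¹' X) = (⊤ : Subgroup ↥K) :=
    Subgroup.closure_preimage_eq_top X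
  haveI hKfg : Group.FG ↥K :=
    Group.fg_iff.mpr ⟨K.subtype ⁻¹' X, hpre,
      hXfin.preimage (Set.injOn_of_injective (Subgroup.subtype_injective K))⟩
  -- the abelianization of K is finite
  haveI habfg : Group.FG (Abelianization ↥K) :=
    Group.fg_of_surjective (f := (Abelianization.of : ↥K →* Abelianization ↥K))
      (fun z => Quotient.inductionOn' z fun k => ⟨k, rfl⟩)
  haveI hab : Finite (Abelianization ↥K) := by
    apply CommGroup.finite_of_fg_torsion
    intro y
    -- torsion subgroup contains all generators
    have hgen : Subgroup.closure ((Abelianization.of (G := ↥K)) ''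
        (K.subtype ⁻¹' X)) = ⊤ := by
      calc Subgroup.closure ((Abelianization.of (G := ↥K)) '' (K.subtype ⁻¹' X))
          = Subgroup.map Abelianization.of (Subgroup.closure (K.subtype ⁻¹' X)) :=
            (MonoidHom.map_closure _ _).symm
        _ = Subgroup.map Abelianization.of ⊤ := by rw [hpre]
        _ = ⊤ := by
            rw [Subgroup.map_top_of_surjective]
            exact fun z => Quotient.inductionOn' z fun k => ⟨k, rfl⟩
    have hle : Subgroup.closure ((Abelianization.of (G := ↥K)) '' (K.subtype ⁻¹' X)) ≤
        CommGroup.torsion (Abelianization ↥K) := by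
      rw [Subgroup.closure_le]
      rintro - ⟨k, hk, rfl⟩
      have hkX : (k : G) ∈ X := hk
      have hkfin : IsOfFinOrder (k : G) := hTor _ hkX
      have hkfin' : IsOfFinOrder k :=
        (Subgroup.subtype_injective K).isOfFinOrder_iff.mp (by exact hkfin)
      exact (Abelianization.of (G := ↥K)).isOfFinOrder hkfin'
    exact hle (hgen ▸ Subgroup.mem_top y)
  -- conclude K is finite
  haveI : Finite (↥K ⧸ _root_.commutator ↥K) := hab
  haveI hKfin : Finite ↥K :=
    Finite.of_equiv _ (Subgroup.groupEquivQuotientProdSubgroup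
      (s := _root_.commutator ↥K)).symm
  exact Set.toFinite _
end
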